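/- Let Q be a rack. The maps α ↦ Dis_α and N ↦ con_N form a monotone Galois connection between the congruence lattice Con(Q) and the lattice Norm(Q) of subgroups of Dis(Q) normal in LMlt(Q): that is, Dis_α ≤ N if and only if α ≤ con_N. -/
import Mathlib


structure LeftQuasigroup (Q : Type*) where
  op : Q → Q → Q
  dv : Q → Q → Q
  dv_op : ∀ x y, dv x (op x y) = y
  op_dv : ∀ x y, op x (dv x y) = y

namespace LeftQuasigroup

variable {Q : Type*} (S : LeftQuasigroup Q)

/-- The left translation by `a`, as a permutation of `Q`. -/
def L (a : Q) : Equiv.Perm Q :=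
  ⟨S.op a, S.dv a, S.dv_op a, S.op_dv a⟩

/-- The left multiplication group. -/
def LMlt : Subgroup (Equiv.Perm Q) :=
  Subgroup.closure (Set.range S.L)

/-- The displacement group. -/
def Dis : Subgroup (Equiv.Perm Q) :=
  Subgroup.closure { f | ∃ a b, f = S.L a * (S.L b)⁻¹ }

/-- `α` is a congruence of the left quasigroup. -/
def IsCongruence (α : Q → Q → Prop) : Prop :=
  Equivalence α ∧
  (∀ a b c d, α a b → α c d → α (S.op a c) (S.op b d)) ∧
  (∀ a b c d, α a b → α c d → α (S.dv a c) (S.dv b d))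

/-- The displacement group relative to `α`: the smallest normal subgroup of
`LMlt` containing all `L a * (L b)⁻¹` with `α a b`, given explicitly as the
subgroup generated by the `LMlt`-conjugates of such elements. -/
def DisRel (α : Q → Q → Prop) : Subgroup (Equiv.Perm Q) :=
  Subgroup.closure
    { f | ∃ g ∈ S.LMlt, ∃ a b, α a b ∧ f = g * (S.L a * (S.L b)⁻¹) * g⁻¹ }

/-- The set `Dis^α = {h ∈ Dis(Q) : h(a) α a for all a}`. -/
def DisUpSet (α : Q → Q → Prop) : Set (Equiv.Perm Q) :=
  { h | h ∈ S.Dis ∧ ∀ a, α (h a) a }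

/-- Left self-distributivity, making a left quasigroup a rack. -/
def IsRack : Prop :=
  ∀ x y z, S.op x (S.op y z) = S.op (S.op x y) (S.op x z)

end LeftQuasigroup

open LeftQuasigroup

/-- The Galois connection: `Dis_α ≤ N` iff `α ≤ con_N`. -/
theorem stmt_13 {Q : Type*} (S : LeftQuasigroup Q) (hSD : S.IsRack)
    (α : Q → Q → Prop) (hα : S.IsCongruence α)
    (N : Subgroup (Equiv.Perm Q)) (hN1 : N ≤ S.Dis)
    (hN2 : ∀ g ∈ S.LMlt, ∀ n ∈ N, g * n * g⁻¹ ∈ N) :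
    S.DisRel α ≤ N ↔ ∀ a b, α a b → S.L a * (S.L b)⁻¹ ∈ N := by
  constructor
  · intro h a b hab
    apply h
    apply Subgroup.subset_closure
    exact ⟨1, one_mem _, a, b, hab, by group⟩
  · intro h
    apply Subgroup.closure_le _ |>.mpr
    rintro f ⟨g, hg, a, b, hab, rfl⟩
    exact hN2 g hg _ (h a b hab)
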